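/- For p, q ∈ (0,1), the Kullback-Leibler divergence from Bernoulli(p) to Bernoulli(q) satisfies D_KL(Ber(p) ‖ Ber(q)) ≤ max{1/(2p(1-p)), 1/(2q(1-q))} · (p-q)². -/

import Mathlib

/-- For `p, q ∈ (0,1)`, the Kullback-Leibler divergence from `Bernoulli(p)` to `Bernoulli(q)`,
given by `p·log(p/q) + (1-p)·log((1-p)/(1-q))`, is at most
`max{1/(2p(1-p)), 1/(2q(1-q))} · (p-q)²`. -/
theorem bernoulli_klDiv_upper_bound (p q : ℝ) (hp : p ∈ Set.Ioo (0:ℝ) 1)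
    (hq : q ∈ Set.Ioo (0:ℝ) 1) :
    p * Real.log (p / q) + (1 - p) * Real.log ((1 - p) / (1 - q)) ≤
      max (1 / (2 * p * (1 - p))) (1 / (2 * q * (1 - q))) * (p - q) ^ 2 := by
  obtain ⟨hp0, hp1⟩ := hp
  obtain ⟨hq0, hq1⟩ := hq
  set M := max (1 / (2 * p * (1 - p))) (1 / (2 * q * (1 - q))) with hM
  set g : ℝ → ℝ := fun t =>
    M * (p - t) ^ 2 - (p * Real.log (p / t) + (1 - p) * Real.log ((1 - p) / (1 - t))) with hg
  have hgp : g p = 0 := by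
    simp [hg, div_self (ne_of_gt hp0), div_self (by linarith : (1:ℝ) - p ≠ 0)]
  -- derivative of g
  have hderiv : ∀ t ∈ Set.Ioo (0:ℝ) 1,
      HasDerivAt g ((t - p) * (2 * M - 1 / (t * (1 - t)))) t := by
    intro t ht
    obtain ⟨ht0, ht1⟩ := ht
    have ht0' : t ≠ 0 := ne_of_gt ht0
    have ht1' : (1:ℝ) - t ≠ 0 := by linarith
    have h1 : HasDerivAt (fun s : ℝ => M * (p - s) ^ 2) (M * (2 * (p - t) * (-1))) t := by
      have := (((hasDerivAt_id t).const_sub p).pow 2).const_mul M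
      simpa using this
    have h2 : HasDerivAt (fun s : ℝ => p * Real.log (p / s)) (p * ((p * (-(t ^ 2)⁻¹)) / (p / t))) t := by
      have hinner : HasDerivAt (fun s : ℝ => p / s) (p * (-(t ^ 2)⁻¹)) t := by
        simpa [div_eq_mul_inv] using (hasDerivAt_inv ht0').const_mul p
      have hne : p / t ≠ 0 := div_ne_zero (ne_of_gt hp0) ht0'
      exact (hinner.log hne).const_mul p
    have h3 : HasDerivAt (fun s : ℝ => (1 - p) * Real.log ((1 - p) / (1 - s)))
        ((1 - p) * (((1 - p) * (-((1 - t) ^ 2)⁻¹ * (-1))) / ((1 - p) / (1 - t)))) t := by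
      have hlin : HasDerivAt (fun s : ℝ => 1 - s) (-1) t := by
        simpa using (hasDerivAt_id t).const_sub 1
      have hinv : HasDerivAt (fun s : ℝ => (1 - s)⁻¹) (-((1 - t) ^ 2)⁻¹ * (-1)) t :=
        (hasDerivAt_inv ht1').comp t hlin
      have hinner : HasDerivAt (fun s : ℝ => (1 - p) / (1 - s))
          ((1 - p) * (-((1 - t) ^ 2)⁻¹ * (-1))) t := by
        simpa [div_eq_mul_inv] using hinv.const_mul (1 - p)
      have hne : (1 - p) / (1 - t) ≠ 0 := div_ne_zero (by linarith) ht1'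
      exact (hinner.log hne).const_mul (1 - p)
    have hp' : p ≠ 0 := ne_of_gt hp0
    have hp1' : (1:ℝ) - p ≠ 0 := by linarith
    have := h1.sub (h2.add h3)
    refine this.congr_deriv ?_
    field_simp [hp', hp1', ht0', ht1']
    ring
  -- the key bound on 1/(t(1-t))
  have hbound : ∀ t, 0 < t → t < 1 → ((q ≤ t ∧ t ≤ p) ∨ (p ≤ t ∧ t ≤ q)) →
      1 / (t * (1 - t)) ≤ 2 * M := by
    intro t ht0 ht1 hcase
    have hpp : (0:ℝ) < p * (1 - p) := by nlinarith
    have hqq : (0:ℝ) < q * (1 - q) := by nlinarith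
    have htt : (0:ℝ) < t * (1 - t) := by nlinarith
    have h2Mp : 1 / (p * (1 - p)) ≤ 2 * M := by
      have := le_max_left (1 / (2 * p * (1 - p))) (1 / (2 * q * (1 - q)))
      rw [← hM] at this
      have : 1 / (2 * p * (1 - p)) ≤ M := this
      calc 1 / (p * (1 - p)) = 2 * (1 / (2 * p * (1 - p))) := by
            rw [mul_one_div, div_eq_div_iff (ne_of_gt hpp) (by nlinarith : (2 * p * (1 - p) : ℝ) ≠ 0)]
            ring
        _ ≤ 2 * M := by linarith
    have h2Mq : 1 / (q * (1 - q)) ≤ 2 * M := by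
      have := le_max_right (1 / (2 * p * (1 - p))) (1 / (2 * q * (1 - q)))
      rw [← hM] at this
      have : 1 / (2 * q * (1 - q)) ≤ M := this
      calc 1 / (q * (1 - q)) = 2 * (1 / (2 * q * (1 - q))) := by
            rw [mul_one_div, div_eq_div_iff (ne_of_gt hqq) (by nlinarith : (2 * q * (1 - q) : ℝ) ≠ 0)]
            ring
        _ ≤ 2 * M := by linarith
    have hmin : q * (1 - q) ≤ t * (1 - t) ∨ p * (1 - p) ≤ t * (1 - t) := by
      rcases hcase with ⟨h1, h2⟩ | ⟨h1, h2⟩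
      · rcases le_total t (1 - q) with h | h
        · left; nlinarith [mul_nonneg (sub_nonneg.2 h1) (by linarith : (0:ℝ) ≤ 1 - t - q)]
        · right; nlinarith [mul_nonneg (sub_nonneg.2 h2) (by linarith : (0:ℝ) ≤ p + t - 1)]
      · rcases le_total t (1 - p) with h | h
        · right; nlinarith [mul_nonneg (sub_nonneg.2 h1) (by linarith : (0:ℝ) ≤ 1 - t - p)]
        · left; nlinarith [mul_nonneg (sub_nonneg.2 h2) (by linarith : (0:ℝ) ≤ q + t - 1)]
    rcases hmin with h | h
    · exact le_trans (one_div_le_one_div_of_le hqq h) h2Mq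
    · exact le_trans (one_div_le_one_div_of_le hpp h) h2Mp
  -- main goal reduces to 0 ≤ g q
  have hgoal : 0 ≤ g q → p * Real.log (p / q) + (1 - p) * Real.log ((1 - p) / (1 - q)) ≤
      M * (p - q) ^ 2 := by
    intro h
    simp only [hg] at h
    linarith
  apply hgoal
  rcases le_total q p with hqp | hpq
  · -- g antitone on [q, p]
    have hsub : Set.Icc q p ⊆ Set.Ioo (0:ℝ) 1 := fun t ht =>
      ⟨lt_of_lt_of_le hq0 ht.1, lt_of_le_of_lt ht.2 hp1⟩
    have hanti : AntitoneOn g (Set.Icc q p) := by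
      apply antitoneOn_of_deriv_nonpos (convex_Icc q p)
      · exact fun t ht => ((hderiv t (hsub ht)).continuousAt).continuousWithinAt
      · intro t ht
        rw [interior_Icc] at ht
        exact ((hderiv t (hsub (Set.Ioo_subset_Icc_self ht))).differentiableAt).differentiableWithinAt
      · intro t ht
        rw [interior_Icc] at ht
        obtain ⟨ht01, ht02⟩ := hsub (Set.Ioo_subset_Icc_self ht)
        rw [(hderiv t ⟨ht01, ht02⟩).deriv]
        have h1 : t - p ≤ 0 := by linarith [ht.2]
        have h2 : 0 ≤ 2 * M - 1 / (t * (1 - t)) := by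
          have := hbound t ht01 ht02 (Or.inl ⟨le_of_lt ht.1, le_of_lt ht.2⟩)
          linarith
        exact mul_nonpos_of_nonpos_of_nonneg h1 h2
    have := hanti (Set.left_mem_Icc.2 hqp) (Set.right_mem_Icc.2 hqp) hqp
    rw [hgp] at this
    exact this
  · -- g monotone on [p, q]
    have hsub : Set.Icc p q ⊆ Set.Ioo (0:ℝ) 1 := fun t ht =>
      ⟨lt_of_lt_of_le hp0 ht.1, lt_of_le_of_lt ht.2 hq1⟩
    have hmono : MonotoneOn g (Set.Icc p q) := by
      apply monotoneOn_of_deriv_nonneg (convex_Icc p q)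
      · exact fun t ht => ((hderiv t (hsub ht)).continuousAt).continuousWithinAt
      · intro t ht
        rw [interior_Icc] at ht
        exact ((hderiv t (hsub (Set.Ioo_subset_Icc_self ht))).differentiableAt).differentiableWithinAt
      · intro t ht
        rw [interior_Icc] at ht
        obtain ⟨ht01, ht02⟩ := hsub (Set.Ioo_subset_Icc_self ht)
        rw [(hderiv t ⟨ht01, ht02⟩).deriv]
        have h1 : 0 ≤ t - p := by linarith [ht.1]
        have h2 : 0 ≤ 2 * M - 1 / (t * (1 - t)) := by
          have := hbound t ht01 ht02 (Or.inr ⟨le_of_lt ht.1, le_of_lt ht.2⟩)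
          linarith
        exact mul_nonneg h1 h2
    have := hmono (Set.left_mem_Icc.2 hpq) (Set.right_mem_Icc.2 hpq) hpq
    rw [hgp] at this
    exact this
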